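/- Let (M, d) be a metric space, let μ be a finite Borel measure on M, let λ > 1, and let x ∈ M. Then for Lebesgue-almost every r > 0 one has ∑_{n=1}^∞ μ({ y ∈ M : r − λ^{-n} < d(x, y) < r + λ^{-n} }) < ∞. In particular, for every δ > 0 and every x ∈ M, the open ball B_r(x) is a (λ, μ)-regular set for Lebesgue-almost every r ∈ (0, δ). -/

import Mathlib

open MeasureTheory

/-- A Borel set `A` is `(λ, μ)`-regular if `∑_{n ≥ 1} μ (∂_{λ^{-n}} A) < ∞`, where
`∂_ρ A` is the open `ρ`-neighborhood of the topological frontier of `A`. -/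
def LambdaMuRegular {M : Type*} [MetricSpace M] [MeasurableSpace M]
    (μ : Measure M) (lam : ℝ) (A : Set M) : Prop :=
  ∑' n : ℕ, μ (Metric.thickening (lam ^ (-((n : ℤ) + 1))) (frontier A)) < ⊤

lemma annulus_measurable_aux {M : Type*} [MetricSpace M] [MeasurableSpace M] [BorelSpace M]
    (x : M) (ε : ℝ) :
    MeasurableSet {p : ℝ × M | p.1 - ε < dist x p.2 ∧ dist x p.2 < p.1 + ε} := by
  have h1 : Continuous fun p : ℝ × M => dist x p.2 :=
    Continuous.dist continuous_const continuous_snd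
  exact ((isOpen_lt (by continuity) h1).inter
    (isOpen_lt h1 (by continuity))).measurableSet

lemma annulus_lintegral_le {M : Type*} [MetricSpace M] [MeasurableSpace M] [BorelSpace M]
    (μ : Measure M) [IsFiniteMeasure μ] (x : M) (ε : ℝ) :
    ∫⁻ r in Set.Ioi (0 : ℝ), μ {y | r - ε < dist x y ∧ dist x y < r + ε}
      ≤ ENNReal.ofReal (2 * ε) * μ Set.univ := by
  set s : Set (ℝ × M) := {p : ℝ × M | p.1 - ε < dist x p.2 ∧ dist x p.2 < p.1 + ε} with hs
  have hsm := annulus_measurable_aux x ε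
  have key : ∫⁻ r in Set.Ioi (0 : ℝ), μ (Prod.mk r ⁻¹' s)
      = ((volume.restrict (Set.Ioi (0:ℝ))).prod μ) s := by
    rw [Measure.prod_apply hsm]
  have heq : ∀ r : ℝ, {y | r - ε < dist x y ∧ dist x y < r + ε} = Prod.mk r ⁻¹' s := by
    intro r; rfl
  calc ∫⁻ r in Set.Ioi (0 : ℝ), μ {y | r - ε < dist x y ∧ dist x y < r + ε}
      = ((volume.restrict (Set.Ioi (0:ℝ))).prod μ) s := by
        simp_rw [heq]; exact key
    _ = ∫⁻ y, (volume.restrict (Set.Ioi (0:ℝ))) ((fun r => (r, y)) ⁻¹' s) ∂μ :=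
        Measure.prod_apply_symm hsm
    _ ≤ ∫⁻ y, ENNReal.ofReal (2 * ε) ∂μ := by
        refine lintegral_mono fun y => ?_
        have h1 : ((fun r => (r, y)) ⁻¹' s) = Set.Ioo (dist x y - ε) (dist x y + ε) := by
          ext r
          simp only [Set.mem_preimage, hs, Set.mem_setOf_eq, Set.mem_Ioo]
          constructor
          · rintro ⟨h1, h2⟩; constructor <;> linarith
          · rintro ⟨h1, h2⟩; constructor <;> linarith
        calc (volume.restrict (Set.Ioi (0:ℝ))) ((fun r => (r, y)) ⁻¹' s)
            ≤ volume ((fun r => (r, y)) ⁻¹' s) := Measure.restrict_le_self _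
          _ = ENNReal.ofReal (2 * ε) := by
              rw [h1, Real.volume_Ioo,
                show dist x y + ε - (dist x y - ε) = 2 * ε by ring]
    _ = ENNReal.ofReal (2 * ε) * μ Set.univ := by
        rw [lintegral_const]

/-- Let `(M, d)` be a metric space, `μ` a finite Borel measure, `λ > 1`,
`x ∈ M`. Then for Lebesgue-a.e. `r > 0`,
`∑_{n ≥ 1} μ {y | r - λ^{-n} < d(x, y) < r + λ^{-n}} < ∞`; in particular for every `δ > 0`
the ball `B_r(x)` is `(λ, μ)`-regular for Lebesgue-a.e. `r ∈ (0, δ)`. -/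
theorem ae_radius_ball_lambdaMuRegular
    {M : Type*} [MetricSpace M] [MeasurableSpace M] [BorelSpace M]
    (μ : Measure M) [IsFiniteMeasure μ] (lam : ℝ) (hlam : 1 < lam) (x : M) :
    (∀ᵐ r ∂(volume.restrict (Set.Ioi (0 : ℝ))),
      ∑' n : ℕ, μ {y | r - lam ^ (-((n : ℤ) + 1)) < dist x y ∧
          dist x y < r + lam ^ (-((n : ℤ) + 1))} < ⊤) ∧
    ∀ δ : ℝ, 0 < δ →
      ∀ᵐ r ∂(volume.restrict (Set.Ioo (0 : ℝ) δ)),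
        LambdaMuRegular μ lam (Metric.ball x r) := by
  have hlam0 : (0:ℝ) < lam := lt_trans one_pos hlam
  set eps : ℕ → ℝ := fun n => lam ^ (-((n : ℤ) + 1)) with heps
  have heps_eq : ∀ n : ℕ, eps n = lam⁻¹ ^ (n + 1) := by
    intro n
    show lam ^ (-((n : ℤ) + 1)) = lam⁻¹ ^ (n + 1)
    rw [show (-((n : ℤ) + 1)) = -((n + 1 : ℕ) : ℤ) by push_cast; ring]
    rw [zpow_neg, zpow_natCast, ← inv_pow]
  -- measurability of each term
  have hmeas : ∀ n : ℕ, Measurable fun r : ℝ =>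
      μ {y | r - eps n < dist x y ∧ dist x y < r + eps n} := by
    intro n
    have := measurable_measure_prodMk_left (ν := μ) (annulus_measurable_aux x (eps n))
    exact this
  have hmeas_sum : Measurable fun r : ℝ => ∑' n : ℕ,
      μ {y | r - eps n < dist x y ∧ dist x y < r + eps n} :=
    Measurable.ennreal_tsum hmeas
  -- the integral is finite
  have hq : ENNReal.ofReal lam⁻¹ < 1 := by
    rw [ENNReal.ofReal_lt_one]
    exact inv_lt_one_of_one_lt₀ hlam
  have hintegral : ∫⁻ r in Set.Ioi (0 : ℝ), (∑' n : ℕ,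
      μ {y | r - eps n < dist x y ∧ dist x y < r + eps n}) ≠ ⊤ := by
    rw [lintegral_tsum (fun n => (hmeas n).aemeasurable)]
    have hbound : ∀ n : ℕ,
        ∫⁻ r in Set.Ioi (0 : ℝ), μ {y | r - eps n < dist x y ∧ dist x y < r + eps n}
          ≤ ENNReal.ofReal 2 * μ Set.univ * (ENNReal.ofReal lam⁻¹) ^ (n + 1) := by
      intro n
      refine le_trans (annulus_lintegral_le μ x (eps n)) ?_
      have h2 : ENNReal.ofReal (2 * eps n) = ENNReal.ofReal 2 * (ENNReal.ofReal lam⁻¹) ^ (n+1) := by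
        rw [heps_eq n, ENNReal.ofReal_mul (by norm_num),
          ENNReal.ofReal_pow (by positivity)]
      rw [h2]; ring_nf; exact le_refl _
    refine ne_top_of_le_ne_top ?_ (ENNReal.tsum_le_tsum hbound)
    have : ∑' n : ℕ, ENNReal.ofReal 2 * μ Set.univ * (ENNReal.ofReal lam⁻¹) ^ (n + 1)
        = ENNReal.ofReal 2 * μ Set.univ * ∑' n : ℕ, (ENNReal.ofReal lam⁻¹) ^ (n + 1) :=
      ENNReal.tsum_mul_left
    rw [this]
    refine ENNReal.mul_ne_top (ENNReal.mul_ne_top ENNReal.ofReal_ne_top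
      (measure_ne_top μ _)) ?_
    have hle : ∑' n : ℕ, (ENNReal.ofReal lam⁻¹) ^ (n + 1)
        ≤ ∑' n : ℕ, (ENNReal.ofReal lam⁻¹) ^ n :=
      ENNReal.tsum_le_tsum fun n => pow_le_pow_of_le_one zero_le hq.le (Nat.le_succ n)
    rw [ENNReal.tsum_geometric] at hle
    exact ne_top_of_le_ne_top (ENNReal.inv_ne_top.mpr
      (tsub_pos_of_lt hq).ne') hle
  have hae : ∀ᵐ r ∂(volume.restrict (Set.Ioi (0 : ℝ))),
      ∑' n : ℕ, μ {y | r - eps n < dist x y ∧ dist x y < r + eps n} < ⊤ :=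
    ae_lt_top hmeas_sum hintegral
  refine ⟨hae, fun δ hδ => ?_⟩
  have hae' := ae_restrict_of_ae_restrict_of_subset (Set.Ioo_subset_Ioi_self : Set.Ioo (0:ℝ) δ ⊆ Set.Ioi 0) hae
  filter_upwards [hae'] with r hr
  unfold LambdaMuRegular
  refine lt_of_le_of_lt (ENNReal.tsum_le_tsum fun n => measure_mono ?_) hr
  intro y hy
  rw [Metric.mem_thickening_iff] at hy
  obtain ⟨z, hz, hyz⟩ := hy
  have hz' : dist z x = r := Metric.frontier_ball_subset_sphere hz
  have habs : |dist y x - dist z x| ≤ dist y z := abs_dist_sub_le y z x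
  rw [hz'] at habs
  rw [abs_le] at habs
  have h1 : dist x y = dist y x := dist_comm x y
  have h2 : eps n = lam ^ (-((n : ℤ) + 1)) := rfl
  constructor
  · linarith [habs.2, hyz]
  · linarith [habs.1, hyz]
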